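/- In a linear black-and-white graph G, if v is black in G and X is a successful pressing path of G that does not contain v, then there exists a successful pressing path X' of G containing v whose longest common subsequence with X has length |X| − 1 (i.e., X' is obtained from X by replacing one pressed vertex by v). -/

import Mathlib

structure BW (V : Type) where
  adj : V → V → Bool
  black : V → Bool
  symm : ∀ u w, adj u w = adj w u
  irrefl : ∀ v, adj v v = false

variable {V : Type} [DecidableEq V]

/-- Pressing a vertex `v`: neighbors toggle color, pairs of neighbors toggle
adjacency, and `v` becomes white and isolated. -/
def press (G : BW V) (v : V) : BW V where
  adj u w :=
    if u = v ∨ w = v ∨ u = w then false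
    else xor (G.adj u w) (G.adj u v && G.adj w v)
  black u := if u = v then false else xor (G.black u) (G.adj u v)
  symm := by
    intro u w
    by_cases h1 : u = v <;> by_cases h2 : w = v <;> by_cases h3 : u = w <;>
      simp_all [G.symm u w, Bool.xor_comm, Bool.and_comm] <;> tauto
  irrefl := by intro u; simp

/-- The graph obtained after pressing the vertices of a list in order. -/
def pressPath (G : BW V) : List V → BW V
  | [] => G
  | v :: P => pressPath (press G v) P

/-- A pressing path is valid if every vertex is black when it is pressed. -/
def ValidPath (G : BW V) : List V → Prop
  | [] => True
  | v :: P => G.black v = true ∧ ValidPath (press G v) P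

/-- The all-white, edgeless graph. -/
def AllWhiteEmpty (G : BW V) : Prop :=
  (∀ v, G.black v = false) ∧ ∀ u w, G.adj u w = false

/-- A successful pressing path: valid and leading to the all-white empty graph. -/
def Successful (G : BW V) (P : List V) : Prop :=
  ValidPath G P ∧ AllWhiteEmpty (pressPath G P)

/-- The underlying simple graph of a black-and-white graph. -/
def BW.toSimple (G : BW V) : SimpleGraph V where
  Adj u w := G.adj u w = true
  symm := ⟨fun u w h => (G.symm w u).trans h⟩
  loopless := ⟨fun v h => by simp [G.irrefl] at h⟩

/-- `l` enumerates the vertices as a path: `G` is linear with vertex order `l`. -/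
def IsPathList (G : BW V) (l : List V) : Prop :=
  l.Nodup ∧ (∀ v, v ∈ l) ∧
    ∀ u w, G.adj u w = true ↔ ∃ i,
      (l[i]? = some u ∧ l[i+1]? = some w) ∨ (l[i]? = some w ∧ l[i+1]? = some u)

/-- A linear (path) black-and-white graph. -/
def IsLinear (G : BW V) : Prop := ∃ l, IsPathList G l

/-- Adjacency step in the metagraph of successful pressing paths:
their longest common subsequence misses at most 2 presses. -/
def Step (G : BW V) (P Q : List V) : Prop :=
  Successful G P ∧ Successful G Q ∧
    ∃ R : List V, R.Sublist P ∧ R.Sublist Q ∧ P.length ≤ R.length + 2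

/-- Transposition of two consecutive presses which are non-adjacent at that moment. -/
def SwapStep (G : BW V) (P Q : List V) : Prop :=
  ∃ A u w B, P = A ++ u :: w :: B ∧ Q = A ++ w :: u :: B ∧
    (pressPath G A).adj u w = false

/-- The induced black-and-white graph on a subset of the vertices. -/
def BW.restrict (G : BW V) (p : V → Prop) [DecidablePred p] : BW {u // p u} where
  adj u w := G.adj u.1 w.1
  black u := G.black u.1
  symm := fun u w => G.symm u.1 w.1
  irrefl := fun u => G.irrefl u.1

/-- The all-black path graph on `n` vertices. -/
def pathAllBlack (n : ℕ) : BW (Fin n) where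
  adj i j := decide (i.1 + 1 = j.1 ∨ j.1 + 1 = i.1)
  black _ := true
  symm := by intro u w; simp [or_comm]
  irrefl := by intro v; simp

-- ### auxiliary development

theorem BW.ext' {G H : BW V} (hadj : ∀ u w, G.adj u w = H.adj u w)
    (hb : ∀ v, G.black v = H.black v) : G = H := by
  cases G; cases H
  simp only [BW.mk.injEq]
  exact ⟨funext fun u => funext fun w => hadj u w, funext hb⟩

theorem press_adj (G : BW V) (p u w : V) : (press G p).adj u w =
    if u = p ∨ w = p ∨ u = w then false
    else xor (G.adj u w) (G.adj u p && G.adj w p) := rfl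

theorem press_black (G : BW V) (p u : V) : (press G p).black u =
    if u = p then false else xor (G.black u) (G.adj u p) := rfl

theorem pressPath_append (G : BW V) (A B : List V) :
    pressPath G (A ++ B) = pressPath (pressPath G A) B := by
  induction A generalizing G with
  | nil => rfl
  | cons a A ih => simp [pressPath, ih]

theorem validPath_append {G : BW V} {A B : List V} :
    ValidPath G (A ++ B) ↔ ValidPath G A ∧ ValidPath (pressPath G A) B := by
  induction A generalizing G with
  | nil => simp [ValidPath, pressPath]
  | cons a A ih => simp [ValidPath, pressPath, ih, and_assoc]

/-- The monotone-linear-forest invariant. -/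
def BWInv (G : BW V) : Prop :=
  ∃ f : V → ℤ, Function.Injective f ∧ ∀ u w x, G.adj u w = true → G.adj u x = true →
    w ≠ x → (f w < f u ∧ f u < f x) ∨ (f x < f u ∧ f u < f w)

theorem inv_press {G : BW V} (hI : BWInv G) (p : V) : BWInv (press G p) := by
  obtain ⟨f, hf, h⟩ := hI
  refine ⟨f, hf, ?_⟩
  intro u w x haw hax hwx
  rw [press_adj] at haw hax
  split_ifs at haw with h1
  push_neg at h1
  split_ifs at hax with h2
  push_neg at h2
  obtain ⟨hup, hwp, huw⟩ := h1
  obtain ⟨-, hxp, hux⟩ := h2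
  cases hAup : G.adj u p <;> cases hAwp : G.adj w p <;> cases hAxp : G.adj x p <;>
    simp [hAup, hAwp, hAxp] at haw hax
  · exact h u w x haw hax hwx
  · exact h u w x haw hax hwx
  · -- adj u p = false, adj w p = true : xor (adj u w) false = true etc
    exact h u w x haw hax hwx
  · exact h u w x haw hax hwx
  · -- u adj p; w,x not adj p
    exact h u w x haw hax hwx
  · -- u adj p, w not, x adj p: adj u w = true, adj u x = false
    have o1 := h p u x ((G.symm u p).symm.trans hAup) ((G.symm x p).symm.trans hAxp) hux
    have o2 := h u w p haw ((by simpa using hAup : G.adj u p = true)) hwp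
    omega
  · -- u adj p, w adj p, x not
    have o1 := h p u w ((G.symm u p).symm.trans hAup) ((G.symm w p).symm.trans hAwp) huw
    have o2 := h u x p hax ((by simpa using hAup : G.adj u p = true)) hxp
    omega
  · -- all three adjacent to p
    have o1 := h p u w ((G.symm u p).symm.trans hAup) ((G.symm w p).symm.trans hAwp) huw
    have o2 := h p u x ((G.symm u p).symm.trans hAup) ((G.symm x p).symm.trans hAxp) hux
    have o3 := h p w x ((G.symm w p).symm.trans hAwp) ((G.symm x p).symm.trans hAxp) hwx
    omega

theorem inv_pressPath {G : BW V} (hI : BWInv G) (A : List V) : BWInv (pressPath G A) := by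
  induction A generalizing G with
  | nil => exact hI
  | cons a A ih => exact ih (inv_press hI a)

theorem inv_no_triangle {G : BW V} (hI : BWInv G) {u v x : V}
    (h1 : G.adj u v = true) (h2 : G.adj u x = true) (h3 : G.adj v x = true) : False := by
  obtain ⟨f, hf, h⟩ := hI
  have hvx : v ≠ x := by rintro rfl; simp [G.irrefl] at h3
  have hux : u ≠ x := by rintro rfl; rw [G.symm] at h2; simp [G.irrefl] at h2
  have o1 := h u v x h1 h2 hvx
  have o2 := h v u x ((G.symm u v) ▸ h1) h3 hux
  omega

theorem pathList_inv {G : BW V} {l : List V} (hl : IsPathList G l) : BWInv G := by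
  obtain ⟨hnd, hmem, hadj⟩ := hl
  have hidx : ∀ (i : ℕ) (u : V), l[i]? = some u → l.idxOf u = i := by
    intro i u hu
    rw [List.getElem?_eq_some_iff] at hu
    obtain ⟨hi, rfl⟩ := hu
    exact List.Nodup.idxOf_getElem hnd i hi
  have hinj : Function.Injective (fun v => (l.idxOf v : ℤ)) := by
    intro a b hab
    simp only [Int.ofNat_inj] at hab
    have ha : l.idxOf a < l.length := List.idxOf_lt_length_iff.mpr (hmem a)
    have hb : l.idxOf b < l.length := List.idxOf_lt_length_iff.mpr (hmem b)
    
    calc a = l[l.idxOf a] := (List.getElem_idxOf ha).symm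
    _ = l[l.idxOf b] := by congr 1
    _ = b := List.getElem_idxOf hb
  refine ⟨fun v => (l.idxOf v : ℤ), hinj, ?_⟩
  intro u w x haw hax hwx
  obtain ⟨i, hi⟩ := (hadj u w).mp haw
  obtain ⟨j, hj⟩ := (hadj u x).mp hax
  rcases hi with ⟨hi1, hi2⟩ | ⟨hi1, hi2⟩ <;> rcases hj with ⟨hj1, hj2⟩ | ⟨hj1, hj2⟩
  · exfalso
    apply hwx
    apply hinj
    have e1 := hidx _ _ hi1; have e2 := hidx _ _ hi2
    have e3 := hidx _ _ hj1; have e4 := hidx _ _ hj2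
    simp only [Int.ofNat_inj]; omega
  · have e1 := hidx _ _ hi1; have e2 := hidx _ _ hi2
    have e3 := hidx _ _ hj1; have e4 := hidx _ _ hj2
    simp only []; omega
  · have e1 := hidx _ _ hi1; have e2 := hidx _ _ hi2
    have e3 := hidx _ _ hj1; have e4 := hidx _ _ hj2
    simp only []; omega
  · exfalso
    apply hwx
    apply hinj
    have e1 := hidx _ _ hi1; have e2 := hidx _ _ hi2
    have e3 := hidx _ _ hj1; have e4 := hidx _ _ hj2
    simp only [Int.ofNat_inj]; omega

theorem press_row {G : BW V} {u v : V} (h : G.adj u v = false) (hne : v ≠ u) :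
    (press G u).black v = G.black v ∧ ∀ x, (press G u).adj v x = G.adj v x := by
  have hvu : G.adj v u = false := (G.symm v u).trans h
  constructor
  · rw [press_black, if_neg hne, hvu]
    simp
  · intro x
    rw [press_adj]
    by_cases hx : x = u
    · subst hx
      simp [hne, hvu, G.irrefl]
    · by_cases hvx : v = x
      · subst hvx; simp [G.irrefl]
      · simp [hne, hx, hvx, hvu]

/-- `u`,`v` form an isolated black-black edge. -/
def IsoEdge (H : BW V) (u v : V) : Prop :=
  H.adj u v = true ∧ H.black u = true ∧ H.black v = true ∧
    (∀ x, x ≠ u → H.adj v x = false) ∧ (∀ x, x ≠ v → H.adj u x = false)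

theorem isoEdge_press_eq {H : BW V} {u v : V} (h : IsoEdge H u v) :
    press H u = press H v := by
  obtain ⟨hadj, hbu, hbv, hv, hu⟩ := h
  have huv : u ≠ v := by rintro rfl; simp [H.irrefl] at hadj
  have hadj' : H.adj v u = true := (H.symm v u).trans hadj
  have hru : ∀ x, x ≠ v → H.adj x u = false := fun x hx => (H.symm x u).trans (hu x hx)
  have hrv : ∀ x, x ≠ u → H.adj x v = false := fun x hx => (H.symm x v).trans (hv x hx)
  apply BW.ext'
  · intro a b
    rw [press_adj, press_adj]
    by_cases hab : a = b
    · simp [hab]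
    by_cases hau : a = u
    · subst hau
      by_cases hbv2 : b = v
      · simp [hbv2]
      · have e1 : H.adj a b = false := hu b hbv2
        have e2 : H.adj b v = false := hrv b (Ne.symm hab)
        simp [hab, hbv2, huv, e1, e2]
    by_cases hbu : b = u
    · subst hbu
      by_cases hav : a = v
      · simp [hav]
      · have e1 : H.adj a b = false := hru a hav
        have e2 : H.adj a v = false := hrv a hab
        simp [hab, hav, huv, e1, e2]
    by_cases hav : a = v
    · have hvb : v ≠ b := fun e => hab (hav.trans e)
      have e1 : H.adj v b = false := hv b hbu
      have e2 : H.adj b u = false := hru b (Ne.symm hvb)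
      simp [hav, hvb, hbu, Ne.symm huv, e1, e2, hadj']
    by_cases hbv2 : b = v
    · have e1 : H.adj a v = false := hrv a hau
      have e2 : H.adj a u = false := hru a hav
      simp [hbv2, hau, hab, Ne.symm huv, e1, e2, hadj']
    · have e1 : H.adj a u = false := hru a hav
      have e2 : H.adj b u = false := hru b hbv2
      have e3 : H.adj a v = false := hrv a hau
      have e4 : H.adj b v = false := hrv b hbu
      simp [hab, hau, hbu, hav, hbv2, e1, e2, e3, e4]
  · intro a
    rw [press_black, press_black]
    by_cases hau : a = u
    · subst hau; simp [huv, hadj, hbu]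
    by_cases hav : a = v
    · subst hav; simp [Ne.symm huv, hadj', hbv]
    · have h1 : H.adj a u = false := hru a hav
      have h2 : H.adj a v = false := hrv a hau
      simp [hau, hav, h1, h2]

theorem find_last_touch (v : V) : ∀ (X : List V) (G : BW V), BWInv G → Successful G X →
    v ∉ X → (G.black v = true ∨ ∃ x, G.adj v x = true) →
    ∃ A u B, X = A ++ u :: B ∧ IsoEdge (pressPath G A) u v := by
  intro X
  induction X with
  | nil =>
    intro G _ hS _ hyp
    have hw : AllWhiteEmpty G := hS.2
    rcases hyp with hb | ⟨x, hx⟩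
    · rw [hw.1 v] at hb; cases hb
    · rw [hw.2 v x] at hx; cases hx
  | cons u P ih =>
    intro G hI hS hnot hyp
    simp only [List.mem_cons, not_or] at hnot
    obtain ⟨hvu, hvP⟩ := hnot
    obtain ⟨⟨hbu, hval⟩, hwhite⟩ := hS
    have hS' : Successful (press G u) P := ⟨hval, hwhite⟩
    have hI' := inv_press hI u
    by_cases hadj : G.adj u v = true
    · by_cases hiso : IsoEdge G u v
      · exact ⟨[], u, P, rfl, hiso⟩
      · have hvadj : G.adj v u = true := (G.symm v u).trans hadj
        have hnew : (press G u).black v = true ∨ ∃ x, (press G u).adj v x = true := by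
          by_cases hbv : G.black v = true
          · by_cases hA1 : ∀ x, x ≠ u → G.adj v x = false
            · by_cases hA2 : ∀ x, x ≠ v → G.adj u x = false
              · exact absurd ⟨hadj, hbu, hbv, hA1, hA2⟩ hiso
              · push_neg at hA2
                obtain ⟨x, hxv, hx⟩ := hA2
                simp only [ne_eq, Bool.not_eq_false] at hx
                have hxu : x ≠ u := by
                  rintro rfl; rw [G.irrefl] at hx; cases hx
                have hvx : G.adj v x = false := by
                  by_contra hvx
                  rw [Bool.not_eq_false] at hvx
                  exact inv_no_triangle hI hadj hx hvx
                have hxu' : G.adj x u = true := (G.symm x u).trans hx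
                refine Or.inr ⟨x, ?_⟩
                rw [press_adj]
                simp [hvu, hxu, Ne.symm hxv, hvx, hvadj, hxu']
            · push_neg at hA1
              obtain ⟨x, hxu, hx⟩ := hA1
              simp only [ne_eq, Bool.not_eq_false] at hx
              have hxv : v ≠ x := by
                rintro rfl; rw [G.irrefl] at hx; cases hx
              have hxu2 : G.adj x u = false := by
                by_contra hc
                rw [Bool.not_eq_false] at hc
                exact inv_no_triangle hI hadj ((G.symm u x).trans hc) hx
              refine Or.inr ⟨x, ?_⟩
              rw [press_adj]
              simp [hvu, hxu, hxv, hx, hxu2]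
          · left
            rw [Bool.not_eq_true] at hbv
            rw [press_black]
            simp [hvu, hvadj, hbv]
        obtain ⟨A, u', B, hPeq, hiso'⟩ := ih (press G u) hI' hS' hvP hnew
        exact ⟨u :: A, u', B, by rw [hPeq]; rfl, hiso'⟩
    · rw [Bool.not_eq_true] at hadj
      obtain ⟨hb, hrow⟩ := press_row hadj hvu
      have hnew : (press G u).black v = true ∨ ∃ x, (press G u).adj v x = true := by
        rcases hyp with h | ⟨x, hx⟩
        · left; rw [hb]; exact h
        · right; exact ⟨x, by rw [hrow x]; exact hx⟩
      obtain ⟨A, u', B, hPeq, hiso'⟩ := ih (press G u) hI' hS' hvP hnew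
      exact ⟨u :: A, u', B, by rw [hPeq]; rfl, hiso'⟩


/-- In a linear graph, if a black vertex `v` is missed by a successful pressing
path `X`, then some successful path `X'` contains `v` and agrees with `X` in a
common subsequence of length `|X| - 1`. -/
theorem stmt7 {V : Type} [DecidableEq V] (G : BW V) (hG : IsLinear G)
    (v : V) (hv : G.black v = true)
    (X : List V) (hX : Successful G X) (hnot : v ∉ X) :
    ∃ X' : List V, Successful G X' ∧ v ∈ X' ∧ X'.length = X.length ∧
      ∃ R : List V, R.Sublist X ∧ R.Sublist X' ∧ R.length = X.length - 1 := by
  obtain ⟨l, hl⟩ := hG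
  have hI : BWInv G := pathList_inv hl
  obtain ⟨A, u, B, rfl, hiso⟩ := find_last_touch v X G hI hX hnot (Or.inl hv)
  have hpe := isoEdge_press_eq hiso
  obtain ⟨hval, hwhite⟩ := hX
  rw [validPath_append] at hval
  obtain ⟨hvalA, hbu2, hvalB⟩ := hval
  refine ⟨A ++ v :: B, ⟨?_, ?_⟩, ?_, ?_, A ++ B, ?_, ?_, ?_⟩
  · rw [validPath_append]
    exact ⟨hvalA, hiso.2.2.1, hpe ▸ hvalB⟩
  · rw [pressPath_append] at hwhite ⊢
    show AllWhiteEmpty (pressPath (press (pressPath G A) v) B)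
    rw [← hpe]
    exact hwhite
  · exact List.mem_append_right A (List.mem_cons_self (a := v) (l := B))
  · simp
  · exact List.Sublist.append (List.Sublist.refl A) (List.sublist_cons_self u B)
  · exact List.Sublist.append (List.Sublist.refl A) (List.sublist_cons_self v B)
  · simp [List.length_append]
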